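/- Deterministic near-optimal selection lemma: let p, q ≥ 1 be integers, φ : {1,…,p} → ℝ, V a real-valued function on subsets of {1,…,p}, and δ ≥ 0 such that |Σ_{j∈S} φ_j − V(S)| ≤ 2qδ for every subset S with |S| ≤ q. Let L, U : {1,…,p} → ℝ satisfy L_j ≤ φ_j ≤ U_j for all j. Let Ŝ be a subset with |Ŝ| ≤ q such that Σ_{j∈S} U_j ≤ Σ_{j∈Ŝ} U_j for every subset S with |S| ≤ q, and let S* be a subset with |S*| ≤ q such that V(S) ≤ V(S*) for every subset S with |S| ≤ q. Then V(Ŝ) ≥ V(S*) − Σ_{j∈Ŝ} (U_j − L_j) − 4qδ. -/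

import Mathlib

open Finset

/-- Deterministic near-optimal selection lemma: if the modality values `φ_j` sum to the
utility `V(S)` up to error `2qδ` on subsets of size at most `q`, `[L_j, U_j]` are
intervals containing `φ_j`, `Ŝ` maximizes the sum of upper bounds `U_j` among subsets of
size at most `q`, and `S*` maximizes `V` among such subsets, then
`V(Ŝ) ≥ V(S*) − Σ_{j∈Ŝ} (U_j − L_j) − 4qδ`. -/
theorem near_optimal_selection (p q : ℕ) (hp : 1 ≤ p) (hq : 1 ≤ q)
    (φ : Fin p → ℝ) (V : Finset (Fin p) → ℝ) (δ : ℝ) (hδ : 0 ≤ δ)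
    (happrox : ∀ S : Finset (Fin p), S.card ≤ q →
      |(∑ j ∈ S, φ j) - V S| ≤ 2 * q * δ)
    (L U : Fin p → ℝ) (hL : ∀ j, L j ≤ φ j) (hU : ∀ j, φ j ≤ U j)
    (Shat : Finset (Fin p)) (hShatCard : Shat.card ≤ q)
    (hShatMax : ∀ S : Finset (Fin p), S.card ≤ q → (∑ j ∈ S, U j) ≤ ∑ j ∈ Shat, U j)
    (Sstar : Finset (Fin p)) (hSstarCard : Sstar.card ≤ q)
    (hSstarMax : ∀ S : Finset (Fin p), S.card ≤ q → V S ≤ V Sstar) :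
    V Shat ≥ V Sstar - (∑ j ∈ Shat, (U j - L j)) - 4 * q * δ := by
  have h1 := abs_le.mp (happrox Shat hShatCard)
  have h2 := abs_le.mp (happrox Sstar hSstarCard)
  have hLφ : (∑ j ∈ Shat, L j) ≤ ∑ j ∈ Shat, φ j := Finset.sum_le_sum fun j _ => hL j
  have hφU : (∑ j ∈ Sstar, φ j) ≤ ∑ j ∈ Sstar, U j := Finset.sum_le_sum fun j _ => hU j
  have hUU := hShatMax Sstar hSstarCard
  have hsub : (∑ j ∈ Shat, (U j - L j)) = (∑ j ∈ Shat, U j) - ∑ j ∈ Shat, L j :=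
    Finset.sum_sub_distrib U L
  linarith
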